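/- Let P be an (s,k)-puzzle that is a strong uniquely solvable puzzle and let h satisfy 2 ≤ h ≤ s. Then every subset P' ⊆ P with |P'| = h is a strong uniquely solvable puzzle; that is, the rows of P form a clique of size s in the h-uniform hypergraph on vertex set {1,2,3}^k whose hyperedges are the size-h subsets of {1,2,3}^k that are strong uniquely solvable puzzles. -/
import Mathlib


/-- Exactly two of the three propositions hold. -/
def ExactlyTwo (A B C : Prop) : Prop :=
  (A ∧ B ∧ ¬C) ∨ (A ∧ ¬B ∧ C) ∨ (¬A ∧ B ∧ C)

/-- At least two of the three propositions hold. -/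
def AtLeastTwo (A B C : Prop) : Prop :=
  (A ∧ B) ∨ (A ∧ C) ∨ (B ∧ C)

/-- A puzzle of width `k` is a finite set of rows in `{1,2,3}^k`; we use the
alphabet `Fin 3` whose three elements are denoted `1`, `2`, `3` (`3 = 0`).
`P` is a strong uniquely solvable puzzle (strong USP). -/
def IsSUSP {k : ℕ} (P : Finset (Fin k → Fin 3)) : Prop :=
  ∀ π₁ π₂ π₃ : Equiv.Perm {r // r ∈ P},
    (π₁ = π₂ ∧ π₂ = π₃) ∨
    ∃ (r : {r // r ∈ P}) (c : Fin k),
      ExactlyTwo ((π₁ r).1 c = 1) ((π₂ r).1 c = 2) ((π₃ r).1 c = 3)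

/-- Clique bound: if `P` is an `(s,k)` strong USP and `2 ≤ h ≤ s`, then every
size-`h` subset of `P` is a strong USP, i.e. the rows of `P` form a clique of
size `s` in the `h`-uniform hypergraph on vertex set `{1,2,3}^k` whose
hyperedges are the size-`h` strong USPs. -/
theorem susp_clique_bound {k : ℕ} (P : Finset (Fin k → Fin 3))
    (hP : IsSUSP P) (h : ℕ) (h2 : 2 ≤ h) (hs : h ≤ P.card) :
    ∀ P' ⊆ P, P'.card = h → IsSUSP P' := by
  intro P' hsub _ π₁ π₂ π₃
  -- embed the subtype of P' into a subtype over P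
  let f : {r // r ∈ P'} ≃ {x : {r // r ∈ P} // x.1 ∈ P'} :=
    { toFun := fun r => ⟨⟨r.1, hsub r.2⟩, r.2⟩
      invFun := fun x => ⟨x.1.1, x.2⟩
      left_inv := fun r => rfl
      right_inv := fun x => rfl }
  rcases hP (π₁.extendDomain f) (π₂.extendDomain f) (π₃.extendDomain f) with
    ⟨h12, h23⟩ | ⟨r, c, hrc⟩
  · left
    constructor
    · apply Equiv.Perm.ext; intro a
      have := congrArg (fun σ => σ ((f a : {x : {r // r ∈ P} // x.1 ∈ P'}) : {r // r ∈ P})) h12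
      simp only [Equiv.Perm.extendDomain_apply_image] at this
      have hv := congrArg Subtype.val this
      exact Subtype.ext hv
    · apply Equiv.Perm.ext; intro a
      have := congrArg (fun σ => σ ((f a : {x : {r // r ∈ P} // x.1 ∈ P'}) : {r // r ∈ P})) h23
      simp only [Equiv.Perm.extendDomain_apply_image] at this
      have hv := congrArg Subtype.val this
      exact Subtype.ext hv
  · right
    by_cases hr : r.1 ∈ P'
    · refine ⟨f.symm ⟨r, hr⟩, c, ?_⟩
      have key : ∀ π : Equiv.Perm {r // r ∈ P'},
          (π.extendDomain f r).1 = (π (f.symm ⟨r, hr⟩)).1 := by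
        intro π
        have h1 := Equiv.Perm.extendDomain_apply_image π f (f.symm ⟨r, hr⟩)
        rw [Equiv.apply_symm_apply] at h1
        exact congrArg Subtype.val h1
      rw [key π₁, key π₂, key π₃] at hrc
      exact hrc
    · exfalso
      have fix : ∀ π : Equiv.Perm {r // r ∈ P'}, π.extendDomain f r = r := fun π =>
        Equiv.Perm.extendDomain_apply_not_subtype π f hr
      rw [fix π₁, fix π₂, fix π₃] at hrc
      rcases hrc with ⟨h1, h2, _⟩ | ⟨h1, _, h3⟩ | ⟨_, h2, h3⟩
      · rw [h1] at h2; exact absurd h2 (by decide)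
      · rw [h1] at h3; exact absurd h3 (by decide)
      · rw [h2] at h3; exact absurd h3 (by decide)
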